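/- In the skew polynomial algebra S on z₁,…,z₄ over an algebraically closed field k of characteristic ≠ 2, with μ₁₂ = μ₁₃ = μ₁₄ = μ₂₄ = μ₃₄ = 1 and μ₂₃ = -1, let a, b ∈ k× with a² ≠ b². Then the quadratic form q₄ + 2a·q₂, where q₂ = z₂z₃ and q₄ = b²z₁² - a²z₂² + z₃² + 2b z₁z₃, factors uniquely up to scalar as (b z₁ + a z₂ + z₃)(b z₁ - a z₂ + z₃). -/

import Mathlib

noncomputable section

/-- Relations of the skew polynomial algebra: `z j * z i = μ i j • (z i * z j)`. -/
inductive SkewRel (k : Type) [Field k] (n : ℕ) (μ : Fin n → Fin n → k) :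
    FreeAlgebra k (Fin n) → FreeAlgebra k (Fin n) → Prop
  | rel (i j : Fin n) :
      SkewRel k n μ (FreeAlgebra.ι k j * FreeAlgebra.ι k i)
        (μ i j • (FreeAlgebra.ι k i * FreeAlgebra.ι k j))

/-- The skew polynomial algebra `S`. -/
abbrev SkewAlg (k : Type) [Field k] (n : ℕ) (μ : Fin n → Fin n → k) : Type :=
  RingQuot (SkewRel k n μ)

/-- The generators `z i` of `S`. -/
def zgen (k : Type) [Field k] (n : ℕ) (μ : Fin n → Fin n → k) (i : Fin n) :
    SkewAlg k n μ :=
  RingQuot.mkAlgHom k (SkewRel k n μ) (FreeAlgebra.ι k i)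

/-- The degree-one component `S₁` (span of the generators). -/
def Sone (k : Type) [Field k] (n : ℕ) (μ : Fin n → Fin n → k) :
    Submodule k (SkewAlg k n μ) :=
  Submodule.span k (Set.range (zgen k n μ))

/-- The degree-two component `S₂` (span of products of two generators). -/
def Stwo (k : Type) [Field k] (n : ℕ) (μ : Fin n → Fin n → k) :
    Submodule k (SkewAlg k n μ) :=
  Submodule.span k {x | ∃ i j, x = zgen k n μ i * zgen k n μ j}

/-- The multiplicative parameters of Example 1: `μ₂₃ = μ₃₂ = -1`, all other `μᵢⱼ = 1`
(0-indexed: the generators `z₁,…,z₄` are `z 0,…,z 3`). -/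
def muEx1 (k : Type) [Field k] : Fin 4 → Fin 4 → k := fun i j =>
  if (i = 1 ∧ j = 2) ∨ (i = 2 ∧ j = 1) then -1 else 1


open Polynomial in
theorem zrel (k : Type) [Field k] (n : ℕ) (μ : Fin n → Fin n → k) (i j : Fin n) :
    zgen k n μ j * zgen k n μ i = μ i j • (zgen k n μ i * zgen k n μ j) := by
  have := RingQuot.mkAlgHom_rel k (SkewRel.rel (k := k) (n := n) (μ := μ) i j)
  simpa [zgen, map_mul, map_smul] using this

open Polynomial in
def fgen (k : Type) [Field k] : Fin 4 → Matrix (Fin 2) (Fin 2) (Polynomial k) :=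
  ![ (X : Polynomial k) • 1, (X^2 : Polynomial k) • !![0,1;1,0],
     (X^4 : Polynomial k) • !![1,0;0,-1], (X^8 : Polynomial k) • 1 ]

theorem frel (k : Type) [Field k] :
    ∀ ⦃x y : FreeAlgebra k (Fin 4)⦄, SkewRel k 4 (muEx1 k) x y →
    FreeAlgebra.lift k (fgen k) x = FreeAlgebra.lift k (fgen k) y := by
  intro x y r
  cases r with
  | rel i j =>
    simp only [map_mul, map_smul, FreeAlgebra.lift_ι_apply]
    fin_cases i <;> fin_cases j <;>
      simp only [fgen, muEx1] <;> norm_num [Fin.ext_iff, mul_comm] <;>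
      (ext i j; fin_cases i <;> fin_cases j <;>
        simp [Matrix.mul_apply, Fin.sum_univ_two, Matrix.smul_apply] <;> ring)

def phi (k : Type) [Field k] :
    SkewAlg k 4 (muEx1 k) →ₐ[k] Matrix (Fin 2) (Fin 2) (Polynomial k) :=
  RingQuot.liftAlgHom k ⟨FreeAlgebra.lift k (fgen k), frel k⟩

theorem phi_z (k : Type) [Field k] (i : Fin 4) :
    phi k (zgen k 4 (muEx1 k) i) = fgen k i := by
  simp [phi, zgen, RingQuot.liftAlgHom_mkAlgHom_apply, FreeAlgebra.lift_ι_apply]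

set_option maxHeartbeats 2000000 in
set_option maxRecDepth 10000 in
open Polynomial in
theorem extract {k : Type} [Field k] (a b : k) (c d : Fin 4 → k)
    (h : (b ^ 2) • (fgen k 0 * fgen k 0) - (a ^ 2) • (fgen k 1 * fgen k 1) +
        fgen k 2 * fgen k 2 + (2 * b) • (fgen k 0 * fgen k 2) +
        (2 * a) • (fgen k 1 * fgen k 2) =
        (∑ i, c i • fgen k i) * (∑ i, d i • fgen k i)) :
    c 0 * d 0 = b ^ 2 ∧ c 1 * d 1 = -a ^ 2 ∧ c 2 * d 2 = 1 ∧ c 3 * d 3 = 0 ∧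
    c 0 * d 2 + c 2 * d 0 = 2 * b ∧ c 0 * d 3 + c 3 * d 0 = 0 ∧
    c 2 * d 3 + c 3 * d 2 = 0 ∧ c 0 * d 1 + c 1 * d 0 = 0 ∧
    c 1 * d 2 - c 2 * d 1 = 2 * a ∧ c 1 * d 3 + c 3 * d 1 = 0 := by
  have h00 := congrFun (congrFun h 0) 0
  have h01 := congrFun (congrFun h 0) 1
  simp [fgen, Matrix.mul_apply, Fin.sum_univ_four, Fin.sum_univ_two,
    Matrix.smul_apply, smul_eq_C_mul] at h00 h01
  ring_nf at h00 h01
  have e1 := congrArg (fun p => Polynomial.coeff p 2) h00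
  have e2 := congrArg (fun p => Polynomial.coeff p 4) h00
  have e3 := congrArg (fun p => Polynomial.coeff p 8) h00
  have e4 := congrArg (fun p => Polynomial.coeff p 16) h00
  have e5 := congrArg (fun p => Polynomial.coeff p 5) h00
  have e6 := congrArg (fun p => Polynomial.coeff p 9) h00
  have e7 := congrArg (fun p => Polynomial.coeff p 12) h00
  have e8 := congrArg (fun p => Polynomial.coeff p 3) h01
  have e9 := congrArg (fun p => Polynomial.coeff p 6) h01
  have e10 := congrArg (fun p => Polynomial.coeff p 10) h01
  simp only [coeff_add, coeff_sub, coeff_neg, coeff_mul_C, coeff_C_mul, coeff_X_pow,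
    coeff_mul_X_pow', coeff_C, ← C_pow]
    at e1 e2 e3 e4 e5 e6 e7 e8 e9 e10
  norm_num at e1 e2 e3 e4 e5 e6 e7 e8 e9 e10
  refine ⟨e1.symm, e2.symm, e3.symm, ?_, by linear_combination -e5, e6.symm, e7.symm,
    by linear_combination -e8, by linear_combination e9, by linear_combination -e10⟩
  rcases e4 with h4 | h4 <;> simp [h4]

theorem solve {k : Type} [Field k] (a b : k) (c d : Fin 4 → k)
    (e1 : c 0 * d 0 = b ^ 2) (e2 : c 1 * d 1 = -a ^ 2) (e3 : c 2 * d 2 = 1)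
    (e4 : c 3 * d 3 = 0) (e5 : c 0 * d 2 + c 2 * d 0 = 2 * b)
    (e6 : c 0 * d 3 + c 3 * d 0 = 0) (e7 : c 2 * d 3 + c 3 * d 2 = 0)
    (e8 : c 0 * d 1 + c 1 * d 0 = 0) (e9 : c 1 * d 2 - c 2 * d 1 = 2 * a)
    (e10 : c 1 * d 3 + c 3 * d 1 = 0) :
    c 2 ≠ 0 ∧ c 0 = b * c 2 ∧ c 1 = a * c 2 ∧ c 3 = 0 ∧
    d 2 = (c 2)⁻¹ ∧ d 0 = b * d 2 ∧ d 1 = -(a * d 2) ∧ d 3 = 0 := by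
  have hc2 : c 2 ≠ 0 := by intro h; rw [h] at e3; simp at e3
  have hd2 : d 2 ≠ 0 := by intro h; rw [h] at e3; simp at e3
  have hcd3 : c 3 = 0 ∧ d 3 = 0 := by
    rcases mul_eq_zero.mp e4 with h | h
    · refine ⟨h, ?_⟩
      rw [h] at e7; simp at e7
      rcases e7 with h' | h'
      · exact absurd h' hc2
      · exact h'
    · refine ⟨?_, h⟩
      rw [h] at e7; simp at e7
      rcases e7 with h' | h'
      · exact h'
      · exact absurd h' hd2
  obtain ⟨hc3, hd3⟩ := hcd3
  have k0 : c 0 * d 2 - b = 0 := by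
    have hsq : (c 0 * d 2 - b) ^ 2 = 0 := by
      linear_combination (c 0 * d 2) * e5 - (c 2 * d 2) * e1 - b ^ 2 * e3
    exact pow_eq_zero_iff (two_ne_zero) |>.mp hsq
  have k1 : c 2 * d 1 + a = 0 := by
    have hsq : (c 2 * d 1 + a) ^ 2 = 0 := by
      linear_combination (-(c 2 * d 1)) * e9 + (c 2 * d 2) * e2 - a ^ 2 * e3
    exact pow_eq_zero_iff (two_ne_zero) |>.mp hsq
  refine ⟨hc2, ?_, ?_, hc3, (inv_eq_of_mul_eq_one_right e3).symm, ?_, ?_, hd3⟩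
  · linear_combination c 2 * k0 - c 0 * e3 + b * e3 - b * e3
  · linear_combination c 2 * e9 + c 2 * k1 - c 1 * e3
  · linear_combination d 2 * e5 - d 2 * k0 - d 0 * e3
  · linear_combination d 2 * k1 - d 1 * e3

set_option maxHeartbeats 1000000 in

/-- With `μ₂₃ = -1` and all other `μᵢⱼ = 1`, and `a, b ∈ k×`, `a² ≠ b²`,
the quadratic form `q₄ + 2a q₂ = b²z₁² - a²z₂² + z₃² + 2b z₁z₃ + 2a z₂z₃` factors
uniquely up to scalar as `(bz₁ + az₂ + z₃)(bz₁ - az₂ + z₃)`. -/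
theorem stmt12 (k : Type) [Field k] [IsAlgClosed k] (hchar : ringChar k ≠ 2)
    (a b : k) (ha : a ≠ 0) (hb : b ≠ 0) (hab : a ^ 2 ≠ b ^ 2) :
    letI z := zgen k 4 (muEx1 k)
    letI q := (b ^ 2) • (z 0 * z 0) - (a ^ 2) • (z 1 * z 1) + z 2 * z 2 +
      (2 * b) • (z 0 * z 2) + (2 * a) • (z 1 * z 2)
    q = (b • z 0 + a • z 1 + z 2) * (b • z 0 - a • z 1 + z 2) ∧
      ∀ L1 L2 : SkewAlg k 4 (muEx1 k),
        L1 ∈ Sone k 4 (muEx1 k) → L2 ∈ Sone k 4 (muEx1 k) → L1 ≠ 0 → L2 ≠ 0 →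
          q = L1 * L2 →
            ∃ l : k, l ≠ 0 ∧ L1 = l • (b • z 0 + a • z 1 + z 2) ∧
              L2 = l⁻¹ • (b • z 0 - a • z 1 + z 2) := by
  set z := zgen k 4 (muEx1 k) with hz
  have h10 : z 1 * z 0 = z 0 * z 1 := by
    simpa [muEx1, Fin.ext_iff] using zrel k 4 (muEx1 k) 0 1
  have h20 : z 2 * z 0 = z 0 * z 2 := by
    simpa [muEx1, Fin.ext_iff] using zrel k 4 (muEx1 k) 0 2
  have h21 : z 2 * z 1 = -(z 1 * z 2) := by
    have h := zrel k 4 (muEx1 k) 1 2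
    have hm : muEx1 k 1 2 = -1 := by norm_num [muEx1]
    rw [hm] at h
    rw [hz, h]
    exact neg_one_smul k (zgen k 4 (muEx1 k) 1 * zgen k 4 (muEx1 k) 2)
  constructor
  · simp only [mul_add, add_mul, mul_sub, sub_mul, smul_mul_assoc, mul_smul_comm,
      smul_smul, h10, h20, h21, smul_neg, neg_smul]
    module
  · intro L1 L2 hL1 hL2 _ _ hq
    rw [Sone, Submodule.mem_span_range_iff_exists_fun] at hL1 hL2
    obtain ⟨c, hc⟩ := hL1
    obtain ⟨d, hd⟩ := hL2
    rw [← hc, ← hd] at hq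
    have H := congrArg (phi k) hq
    simp only [hz, map_add, map_sub, map_mul, map_smul, map_sum, phi_z] at H
    obtain ⟨E1, E2, E3, E4, E5, E6, E7, E8, E9, E10⟩ := extract a b c d H
    obtain ⟨hc2, hc0, hc1, hc3, hd2v, hd0, hd1, hd3⟩ :=
      solve a b c d E1 E2 E3 E4 E5 E6 E7 E8 E9 E10
    refine ⟨c 2, hc2, ?_, ?_⟩
    · rw [← hc, Fin.sum_univ_four, hc0, hc1, hc3, hz]
      module
    · rw [← hd, Fin.sum_univ_four, hd0, hd1, hd3, hd2v, hz]
      module
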